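/- The operator Π_1 F† Π_R F Π_1 on L²([-1,1]) is an integral operator with kernel K(x,x') = sin(R(x−x'))/(π(x−x')), and it commutes with the prolate spheroidal differential operator L = d/dx[(1−x²) d/dx] − R²x²; consequently its eigenfunctions are the prolate spheroidal wave functions. -/

import Mathlib

open MeasureTheory Real Set Filter

/-- Fourier transform with the paper's convention
`F(f)(y) = (1/√(2π)) ∫ f(x) e^{ixy} dx`. -/
noncomputable def FT (f : ℝ → ℂ) (y : ℝ) : ℂ :=
  ((1 / Real.sqrt (2 * Real.pi) : ℝ) : ℂ) *
    ∫ x : ℝ, f x * Complex.exp (Complex.I * x * y)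

/-- The integral operator on L^2([-1,1]) with the sinc kernel K(x,x') = sin(R(x-x'))/(pi(x-x')). -/
noncomputable def Kop (R : ℝ) (g : ℝ → ℂ) (x : ℝ) : ℂ :=
  ∫ x' in Set.Icc (-1 : ℝ) 1,
    ((Real.sin (R * (x - x')) / (Real.pi * (x - x')) : ℝ) : ℂ) * g x'

/-- The prolate spheroidal differential operator L = d/dx[(1-x^2) d/dx] - R^2 x^2. -/
noncomputable def Lop (R : ℝ) (g : ℝ → ℂ) (x : ℝ) : ℂ :=
  deriv (fun t : ℝ => (((1 - t ^ 2 : ℝ)) : ℂ) * deriv g t) x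
    - ((R ^ 2 * x ^ 2 : ℝ) : ℂ) * g x


noncomputable def G (R : ℝ) : ℝ → ℝ := dslope (fun t : ℝ => Real.sin (R * t)) 0

lemma analyticAt_rsin (R : ℝ) (x : ℝ) : AnalyticAt ℝ (fun t : ℝ => Real.sin (R * t)) x := by
  have h1 : AnalyticAt ℝ Complex.sin ((Complex.ofRealCLM) ((R * x : ℝ))) :=
    (Complex.differentiable_sin.analyticAt _).restrictScalars
  have h2 : AnalyticAt ℝ (fun t : ℝ => ((t : ℂ))) (R * x) := Complex.ofRealCLM.analyticAt _
  have h3 : AnalyticAt ℝ (fun t : ℝ => Complex.sin ((t : ℂ))) (R * x) := h1.comp h2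
  have h4 : AnalyticAt ℝ (fun t : ℝ => R * t) x := analyticAt_const.mul analyticAt_id
  have h5 : AnalyticAt ℝ (fun t : ℝ => Complex.sin ((R * t : ℝ) : ℂ)) x := h3.comp h4
  have h6 : AnalyticAt ℝ (fun t : ℝ => (Complex.sin ((R * t : ℝ) : ℂ)).re) x :=
    (Complex.reCLM.analyticAt _).comp h5
  refine h6.congr (Eventually.of_forall fun t => ?_)
  exact Complex.sin_ofReal_re (R*t)

lemma G_eq (R : ℝ) {t : ℝ} (ht : t ≠ 0) : G R t = Real.sin (R * t) / t := by
  rw [G, dslope_of_ne _ ht, slope_def_field]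
  simp [div_eq_div_iff ht ht]

lemma G_contDiff (R : ℝ) : ContDiff ℝ (⊤ : ℕ∞) (G R) := by
  rw [contDiff_iff_contDiffAt]
  intro x
  rcases eq_or_ne x 0 with rfl | hx
  · obtain ⟨p, hp⟩ := analyticAt_rsin R 0
    exact hp.has_fpower_series_dslope_fslope.analyticAt.contDiffAt
  · have h1 : ContDiffAt ℝ (⊤ : ℕ∞) (fun t : ℝ => Real.sin (R * t) / t) x :=
      ((analyticAt_rsin R x).contDiffAt).div contDiffAt_id hx
    refine h1.congr_of_eventuallyEq ?_
    filter_upwards [isOpen_ne.mem_nhds hx] with t ht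
    exact G_eq R ht

lemma G_mul (R : ℝ) (t : ℝ) : t * G R t = Real.sin (R * t) := by
  rcases eq_or_ne t 0 with rfl | ht
  · simp
  · rw [G_eq R ht]; field_simp

lemma G_diff (R : ℝ) : Differentiable ℝ (G R) := (G_contDiff R).differentiable (by norm_num)

lemma G_deriv_contDiff (R : ℝ) : ContDiff ℝ (⊤ : ℕ∞) (deriv (G R)) := by
  have := (G_contDiff R).iterate_deriv 1
  simpa using this

lemma G_deriv_diff (R : ℝ) : Differentiable ℝ (deriv (G R)) :=
  (G_deriv_contDiff R).differentiable (by norm_num)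

lemma G_key (R : ℝ) (s : ℝ) :
    G R s + s * deriv (G R) s = R * Real.cos (R * s) := by
  have h1 : HasDerivAt (fun u : ℝ => u * G R u) (1 * G R s + s * deriv (G R) s) s :=
    (hasDerivAt_id s).mul ((G_diff R) s).hasDerivAt
  have h1' : HasDerivAt (fun u : ℝ => Real.sin (R * u)) (1 * G R s + s * deriv (G R) s) s := by
    refine h1.congr_of_eventuallyEq (Eventually.of_forall fun u => ?_)
    exact (G_mul R u).symm
  have h2 : HasDerivAt (fun u : ℝ => Real.sin (R * u)) (Real.cos (R * s) * R) s := by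
    simpa using ((hasDerivAt_id s).const_mul R).sin
  have := h1'.unique h2
  linarith [this]

lemma G_ode (R : ℝ) (t : ℝ) :
    t * deriv (deriv (G R)) t + 2 * deriv (G R) t + R ^ 2 * (t * G R t) = 0 := by
  have h1 : HasDerivAt (fun s : ℝ => G R s + s * deriv (G R) s)
      (deriv (G R) t + (1 * deriv (G R) t + t * deriv (deriv (G R)) t)) t :=
    ((G_diff R) t).hasDerivAt.add ((hasDerivAt_id t).mul ((G_deriv_diff R) t).hasDerivAt)
  have h1' : HasDerivAt (fun s : ℝ => R * Real.cos (R * s))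
      (deriv (G R) t + (1 * deriv (G R) t + t * deriv (deriv (G R)) t)) t := by
    refine h1.congr_of_eventuallyEq (Eventually.of_forall fun u => ?_)
    exact (G_key R u).symm
  have h2 : HasDerivAt (fun s : ℝ => R * Real.cos (R * s))
      ((-Real.sin (R * t) * R) * R) t := by
    have := (((hasDerivAt_id t).const_mul R).cos).const_mul R
    simp only [id_eq, mul_one] at this
    exact this.congr_deriv (by ring)
  have h3 := h1'.unique h2
  have h4 : t * G R t = Real.sin (R * t) := G_mul R t
  nlinarith [h3, h4]

lemma param_deriv (g g' : ℝ → ℝ) (hg : ∀ u, HasDerivAt g (g' u) u)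
    (hgc : Continuous g) (hg'c : Continuous g') (h : ℝ → ℂ)
    (hh : ContinuousOn h (Set.Icc (-1:ℝ) 1)) (t₀ : ℝ) :
    HasDerivAt (fun t => ∫ x' in Set.Icc (-1:ℝ) 1, ((g (t - x') : ℝ) : ℂ) * h x')
      (∫ x' in Set.Icc (-1:ℝ) 1, ((g' (t₀ - x') : ℝ) : ℂ) * h x') t₀ := by
  obtain ⟨C, hC⟩ := (isCompact_Icc (a := t₀ - 2) (b := t₀ + 2)).exists_bound_of_continuousOn
    hg'c.continuousOn
  have contF : ∀ t : ℝ, ContinuousOn (fun x' => ((g (t - x') : ℝ) : ℂ) * h x')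
      (Set.Icc (-1:ℝ) 1) := fun t =>
    ((Complex.continuous_ofReal.comp (hgc.comp (continuous_const.sub continuous_id))).continuousOn).mul hh
  have key := hasDerivAt_integral_of_dominated_loc_of_deriv_le
    (μ := volume.restrict (Set.Icc (-1:ℝ) 1))
    (F := fun t x' => ((g (t - x') : ℝ) : ℂ) * h x')
    (F' := fun t x' => ((g' (t - x') : ℝ) : ℂ) * h x')
    (x₀ := t₀) (s := Metric.ball t₀ 1) (bound := fun x' => C * ‖h x'‖) (Metric.ball_mem_nhds t₀ one_pos)
    (Eventually.of_forall fun t => (contF t).aestronglyMeasurable measurableSet_Icc)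
    ((contF t₀).integrableOn_Icc)
    ((((Complex.continuous_ofReal.comp (hg'c.comp
        (continuous_const.sub continuous_id))).continuousOn).mul hh).aestronglyMeasurable
      measurableSet_Icc)
    ?_ ((continuousOn_const.mul hh.norm).integrableOn_Icc) ?_
  · exact key.2
  · filter_upwards [ae_restrict_mem measurableSet_Icc] with x' hx' t ht
    have h1 : t - x' ∈ Set.Icc (t₀ - 2) (t₀ + 2) := by
      rw [Metric.mem_ball, Real.dist_eq, abs_lt] at ht
      obtain ⟨h2, h3⟩ := hx'
      constructor <;> linarith
    have h4 : ‖(((g' (t - x') : ℝ)) : ℂ) * h x'‖ = ‖g' (t - x')‖ * ‖h x'‖ := by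
      rw [norm_mul, Complex.norm_real]
    rw [h4]
    exact mul_le_mul_of_nonneg_right (hC _ h1) (norm_nonneg _)
  · refine Eventually.of_forall fun x' t _ => ?_
    have h5 : HasDerivAt (fun t : ℝ => g (t - x')) (g' (t - x')) t := by
      exact ((hg (t - x')).comp t ((hasDerivAt_id t).sub_const x')).congr_deriv (by ring)
    exact h5.ofReal_comp.mul_const (h x')


lemma contDiff_deriv' {E : Type*} [NormedAddCommGroup E] [NormedSpace ℝ E] {f : ℝ → E}
    (h : ContDiff ℝ (⊤ : ℕ∞) f) : ContDiff ℝ (⊤ : ℕ∞) (deriv f) := by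
  simpa using h.iterate_deriv 1

lemma Kop_eq (R : ℝ) (g : ℝ → ℂ) (x : ℝ) :
    Kop R g x = ∫ x' in Set.Icc (-1:ℝ) 1, ((G R (x - x') / Real.pi : ℝ) : ℂ) * g x' := by
  refine integral_congr_ae (ae_restrict_of_ae ?_)
  have h0 : ∀ᵐ (x' : ℝ), x' ≠ x := by
    rw [ae_iff]
    have : {x' : ℝ | ¬ x' ≠ x} = {x} := by ext y; simp
    rw [this]
    exact measure_singleton x
  filter_upwards [h0] with x' hx'
  have hu : x - x' ≠ 0 := sub_ne_zero.mpr (Ne.symm hx')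
  rw [G_eq R hu]
  have h2 : Real.sin (R*(x-x'))/(Real.pi*(x-x')) = Real.sin (R*(x-x'))/(x-x')/Real.pi := by
    rw [div_div, mul_comm Real.pi (x - x')]
  rw [h2]

lemma kernel_identity (R x x' : ℝ) :
    (-(2*x)) * (deriv (G R) (x-x')/Real.pi) + (1-x^2) * (deriv (deriv (G R)) (x-x')/Real.pi)
      - R^2*x^2 * (G R (x-x')/Real.pi)
    = (1-x'^2) * (deriv (deriv (G R)) (x-x')/Real.pi) + 2*x' * (deriv (G R) (x-x')/Real.pi)
      - R^2*x'^2 * (G R (x-x')/Real.pi) := by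
  have h := G_ode R (x - x')
  have hπ : Real.pi ≠ 0 := Real.pi_ne_zero
  have hπ2 : Real.pi ≠ 0 := Real.pi_ne_zero
  linear_combination (-(x+x')/Real.pi) * h

lemma part2 (R : ℝ) (f : ℝ → ℂ) (hf : ContDiff ℝ (⊤ : ℕ∞) f) (x : ℝ) :
    Kop R (Lop R f) x = Lop R (Kop R f) x := by
  -- kernel functions
  set g0 : ℝ → ℝ := fun u => G R u / Real.pi with hg0def
  set g1 : ℝ → ℝ := fun u => deriv (G R) u / Real.pi with hg1def
  set g2 : ℝ → ℝ := fun u => deriv (deriv (G R)) u / Real.pi with hg2def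
  have hg01 : ∀ u, HasDerivAt g0 (g1 u) u := fun u => ((G_diff R) u).hasDerivAt.div_const _
  have hg12 : ∀ u, HasDerivAt g1 (g2 u) u := fun u => ((G_deriv_diff R) u).hasDerivAt.div_const _
  have g0c : Continuous g0 := ((G_contDiff R).continuous).div_const _
  have g1c : Continuous g1 := ((G_deriv_contDiff R).continuous).div_const _
  have g2c : Continuous g2 :=
    ((contDiff_deriv' (G_deriv_contDiff R)).continuous).div_const _
  -- facts about f
  have hfd : Differentiable ℝ f := hf.differentiable (by norm_num)
  have hfc : Continuous f := hf.continuous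
  have hdf_cd : ContDiff ℝ (⊤ : ℕ∞) (deriv f) := contDiff_deriv' hf
  set v : ℝ → ℂ := fun t : ℝ => (((1 - t ^ 2 : ℝ)) : ℂ) * deriv f t with hvdef
  have hv_cd : ContDiff ℝ (⊤ : ℕ∞) v := by
    refine ContDiff.mul ?_ hdf_cd
    exact Complex.ofRealCLM.contDiff.comp (contDiff_const.sub (contDiff_id.pow 2))
  have hv_d : Differentiable ℝ v := hv_cd.differentiable (by norm_num)
  have hdv_c : Continuous (deriv v) := (contDiff_deriv' hv_cd).continuous
  have hLf : Lop R f = fun x' => deriv v x' - ((R ^ 2 * x' ^ 2 : ℝ) : ℂ) * f x' := rfl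
  -- derivative-of-kernel composed functions
  -- continuity of composed kernels
  have c0 : Continuous fun x' : ℝ => ((g0 (x - x') : ℝ) : ℂ) :=
    Complex.continuous_ofReal.comp (g0c.comp (continuous_const.sub continuous_id))
  have c1 : Continuous fun x' : ℝ => ((g1 (x - x') : ℝ) : ℂ) :=
    Complex.continuous_ofReal.comp (g1c.comp (continuous_const.sub continuous_id))
  have c2 : Continuous fun x' : ℝ => ((g2 (x - x') : ℝ) : ℂ) :=
    Complex.continuous_ofReal.comp (g2c.comp (continuous_const.sub continuous_id))
  -- derivative of y ↦ gk (x - y)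
  have hderx : ∀ (g g' : ℝ → ℝ), (∀ u, HasDerivAt g (g' u) u) → ∀ x' : ℝ,
      HasDerivAt (fun y : ℝ => g (x - y)) (-(g' (x - x'))) x' := by
    intro g g' hg x'
    have h1 : HasDerivAt (fun y : ℝ => x - y) (-1) x' := by
      simpa using (hasDerivAt_id x').const_sub x
    exact ((hg (x - x')).comp x' h1).congr_deriv (by ring)
  -- the parametric integral functions
  set KG : ℝ → ℂ := fun t => ∫ x' in Set.Icc (-1:ℝ) 1, ((g0 (t - x') : ℝ) : ℂ) * f x' with hKGdef
  set D1 : ℝ → ℂ := fun t => ∫ x' in Set.Icc (-1:ℝ) 1, ((g1 (t - x') : ℝ) : ℂ) * f x' with hD1def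
  set D2 : ℝ → ℂ := fun t => ∫ x' in Set.Icc (-1:ℝ) 1, ((g2 (t - x') : ℝ) : ℂ) * f x' with hD2def
  have hKop : Kop R f = KG := by
    funext t
    rw [Kop_eq R f t, hKGdef]
  have hD1At : ∀ t, HasDerivAt KG (D1 t) t := fun t =>
    param_deriv g0 g1 hg01 g0c g1c f hfc.continuousOn t
  have hD2At : ∀ t, HasDerivAt D1 (D2 t) t := fun t =>
    param_deriv g1 g2 hg12 g1c g2c f hfc.continuousOn t
  have hderivKG : deriv KG = D1 := funext fun t => (hD1At t).deriv
  -- compute the RHS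
  have hA : HasDerivAt (fun t : ℝ => (((1 - t^2 : ℝ)) : ℂ)) ((-(2*x) : ℝ) : ℂ) x := by
    have h2 : HasDerivAt (fun t : ℝ => 1 - t^2) (-(2*x)) x := by
      simpa using (hasDerivAt_pow 2 x).const_sub 1
    exact h2.ofReal_comp
  have hmulAt : HasDerivAt (fun t : ℝ => (((1 - t^2 : ℝ)) : ℂ) * D1 t)
      (((-(2*x) : ℝ) : ℂ) * D1 x + (((1 - x^2 : ℝ)) : ℂ) * D2 x) x := hA.mul (hD2At x)
  have hRHS : Lop R (Kop R f) x
      = ((-(2*x):ℝ):ℂ) * D1 x + ((1-x^2:ℝ):ℂ) * D2 x - ((R^2*x^2:ℝ):ℂ) * KG x := by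
    rw [Lop, hKop, hderivKG, hmulAt.deriv]
  -- conversion from Icc set integrals to interval integrals
  have hIcc : ∀ (h : ℝ → ℂ), (∫ x' in Set.Icc (-1:ℝ) 1, h x') = ∫ x' in (-1:ℝ)..1, h x' := by
    intro h
    rw [integral_Icc_eq_integral_Ioc, ← intervalIntegral.integral_of_le (by norm_num : (-1:ℝ) ≤ 1)]
  -- the common integrand
  set W : ℝ → ℂ := fun x' =>
    (((1-x'^2) * g2 (x-x') + 2*x'*g1 (x-x') - R^2*x'^2 * g0 (x-x') : ℝ) : ℂ) * f x' with hWdef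
  have int_p1 : IntervalIntegrable
      (fun x' : ℝ => ((-(2*x):ℝ):ℂ) * (((g1 (x - x') : ℝ):ℂ) * f x')) volume (-1) 1 :=
    (continuous_const.mul (c1.mul hfc)).intervalIntegrable _ _
  have int_p2 : IntervalIntegrable
      (fun x' : ℝ => ((1-x^2:ℝ):ℂ) * (((g2 (x - x') : ℝ):ℂ) * f x')) volume (-1) 1 :=
    (continuous_const.mul (c2.mul hfc)).intervalIntegrable _ _
  have int_p3 : IntervalIntegrable
      (fun x' : ℝ => ((R^2*x^2:ℝ):ℂ) * (((g0 (x - x') : ℝ):ℂ) * f x')) volume (-1) 1 :=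
    (continuous_const.mul (c0.mul hfc)).intervalIntegrable _ _
  -- RHS as a single interval integral
  have hRHS2 : Lop R (Kop R f) x = ∫ x' in (-1:ℝ)..1, W x' := by
    rw [hRHS, hKGdef, hD1def, hD2def]
    simp only [hIcc]
    rw [← intervalIntegral.integral_const_mul, ← intervalIntegral.integral_const_mul,
      ← intervalIntegral.integral_const_mul,
      ← intervalIntegral.integral_add int_p1 int_p2,
      ← intervalIntegral.integral_sub (int_p1.add int_p2) int_p3]
    refine intervalIntegral.integral_congr fun x' _ => ?_
    have hker := kernel_identity R x x'
    simp only [hWdef]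
    simp only [hg0def, hg1def, hg2def]
    have e1 : ((-(2*x):ℝ):ℂ) * (((deriv (G R) (x-x')/Real.pi : ℝ):ℂ) * f x')
        + ((1-x^2:ℝ):ℂ) * (((deriv (deriv (G R)) (x-x')/Real.pi : ℝ):ℂ) * f x')
        - ((R^2*x^2:ℝ):ℂ) * (((G R (x-x')/Real.pi : ℝ):ℂ) * f x')
        = (((-(2*x)) * (deriv (G R) (x-x')/Real.pi) + (1-x^2) * (deriv (deriv (G R)) (x-x')/Real.pi)
            - R^2*x^2 * (G R (x-x')/Real.pi) : ℝ) : ℂ) * f x' := by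
      push_cast
      ring
    rw [e1, hker]
  -- LHS: Kop applied to Lop f
  have hLHS1 : Kop R (Lop R f) x
      = ∫ x' in (-1:ℝ)..1, ((g0 (x - x') : ℝ) : ℂ) * (Lop R f x') := by
    rw [Kop_eq R _ x, hIcc]
  -- split off the potential term
  have hsplit : (∫ x' in (-1:ℝ)..1, ((g0 (x - x') : ℝ) : ℂ) * (Lop R f x'))
      = (∫ x' in (-1:ℝ)..1, ((g0 (x - x') : ℝ) : ℂ) * deriv v x')
        - ∫ x' in (-1:ℝ)..1, ((g0 (x - x') : ℝ) : ℂ) * (((R^2*x'^2 : ℝ):ℂ) * f x') := by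
    have int_a : IntervalIntegrable
        (fun x' : ℝ => ((g0 (x - x') : ℝ) : ℂ) * deriv v x') volume (-1) 1 :=
      (c0.mul hdv_c).intervalIntegrable _ _
    have int_b : IntervalIntegrable
        (fun x' : ℝ => ((g0 (x - x') : ℝ) : ℂ) * (((R^2*x'^2 : ℝ):ℂ) * f x')) volume (-1) 1 :=
      (c0.mul ((Complex.continuous_ofReal.comp
        (continuous_const.mul (continuous_pow 2))).mul hfc)).intervalIntegrable _ _
    rw [← intervalIntegral.integral_sub int_a int_b]
    refine intervalIntegral.integral_congr fun x' _ => ?_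
    rw [hLf]
    ring
  -- first integration by parts
  have hu1 : ∀ x' ∈ Set.uIcc (-1:ℝ) 1, HasDerivAt (fun y : ℝ => ((g0 (x - y) : ℝ) : ℂ))
      (((-(g1 (x - x')) : ℝ) : ℂ)) x' := fun x' _ => (hderx g0 g1 hg01 x').ofReal_comp
  have hv1 : ∀ x' ∈ Set.uIcc (-1:ℝ) 1, HasDerivAt v (deriv v x') x' := fun x' _ =>
    (hv_d x').hasDerivAt
  have hibp1 : (∫ x' in (-1:ℝ)..1, ((g0 (x - x') : ℝ) : ℂ) * deriv v x')
      = ∫ x' in (-1:ℝ)..1, ((g1 (x - x') : ℝ) : ℂ) * v x' := by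
    rw [intervalIntegral.integral_mul_deriv_eq_deriv_mul hu1 hv1
      ((Complex.continuous_ofReal.comp
        ((g1c.comp (continuous_const.sub continuous_id)).neg)).intervalIntegrable _ _)
      (hdv_c.intervalIntegrable _ _)]
    have hv1' : v 1 = 0 := by simp [hvdef]
    have hv2' : v (-1) = 0 := by
      simp only [hvdef]
      norm_num
    rw [hv1', hv2']
    simp only [mul_zero, zero_sub, sub_zero, zero_add]
    rw [← intervalIntegral.integral_neg]
    refine intervalIntegral.integral_congr fun x' _ => ?_
    push_cast
    ring
  -- second integration by parts
  have hu2 : ∀ x' ∈ Set.uIcc (-1:ℝ) 1,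
      HasDerivAt (fun y : ℝ => ((g1 (x - y) * (1 - y^2) : ℝ) : ℂ))
      ((((-(g2 (x - x'))) * (1 - x'^2) + g1 (x - x') * (-(2*x')) : ℝ) : ℂ)) x' := by
    intro x' _
    have hreal : HasDerivAt (fun y : ℝ => g1 (x - y) * (1 - y^2))
        ((-(g2 (x - x'))) * (1 - x'^2) + g1 (x - x') * (-(2*x'))) x' := by
      refine (hderx g1 g2 hg12 x').mul ?_
      simpa using (hasDerivAt_pow 2 x').const_sub 1
    exact hreal.ofReal_comp
  have hvf : ∀ x' ∈ Set.uIcc (-1:ℝ) 1, HasDerivAt f (deriv f x') x' := fun x' _ =>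
    (hfd x').hasDerivAt
  have hibp2 : (∫ x' in (-1:ℝ)..1, ((g1 (x - x') : ℝ) : ℂ) * v x')
      = ∫ x' in (-1:ℝ)..1,
          (((g2 (x - x')) * (1 - x'^2) + 2*x'*g1 (x - x') : ℝ) : ℂ) * f x' := by
    have step : (∫ x' in (-1:ℝ)..1, ((g1 (x - x') : ℝ) : ℂ) * v x')
        = ∫ x' in (-1:ℝ)..1, ((g1 (x - x') * (1 - x'^2) : ℝ) : ℂ) * deriv f x' := by
      refine intervalIntegral.integral_congr fun x' _ => ?_
      simp only [hvdef]
      push_cast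
      ring
    have cu2' : Continuous fun x' : ℝ =>
        (-(g2 (x - x'))) * (1 - x'^2) + g1 (x - x') * (-(2*x')) :=
      (((g2c.comp (continuous_const.sub continuous_id)).neg).mul
        (continuous_const.sub (continuous_pow 2))).add
        ((g1c.comp (continuous_const.sub continuous_id)).mul
          ((continuous_const.mul continuous_id).neg))
    rw [step, intervalIntegral.integral_mul_deriv_eq_deriv_mul hu2 hvf
      ((Complex.continuous_ofReal.comp cu2').intervalIntegrable _ _)
      ((hdf_cd.continuous).intervalIntegrable _ _)]
    norm_num
    rw [← intervalIntegral.integral_neg]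
    refine intervalIntegral.integral_congr fun x' _ => ?_
    ring
  -- put the LHS together
  have hLHS : Kop R (Lop R f) x = ∫ x' in (-1:ℝ)..1, W x' := by
    have int_c : IntervalIntegrable
        (fun x' : ℝ => (((g2 (x - x')) * (1 - x'^2) + 2*x'*g1 (x - x') : ℝ) : ℂ) * f x')
        volume (-1) 1 := by
      refine ((Complex.continuous_ofReal.comp ?_).mul hfc).intervalIntegrable _ _
      exact ((g2c.comp (continuous_const.sub continuous_id)).mul
        (continuous_const.sub (continuous_pow 2))).add
        ((continuous_const.mul continuous_id).mul
          (g1c.comp (continuous_const.sub continuous_id)))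
    have int_b : IntervalIntegrable
        (fun x' : ℝ => ((g0 (x - x') : ℝ) : ℂ) * (((R^2*x'^2 : ℝ):ℂ) * f x')) volume (-1) 1 :=
      (c0.mul ((Complex.continuous_ofReal.comp
        (continuous_const.mul (continuous_pow 2))).mul hfc)).intervalIntegrable _ _
    rw [hLHS1, hsplit, hibp1, hibp2, ← intervalIntegral.integral_sub int_c int_b]
    refine intervalIntegral.integral_congr fun x' _ => ?_
    simp only [hWdef]
    push_cast
    ring
  rw [hLHS, hRHS2]



lemma exp_sub_exp (w : ℂ) :
    Complex.exp (Complex.I*w) - Complex.exp (-(Complex.I*w)) = 2*Complex.I*Complex.sin w := by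
  rw [Complex.sin]; ring_nf; rw [Complex.I_sq]; ring

lemma real_kernel (R x x' : ℝ) (ha : x' - x ≠ 0) :
    (1/Real.sqrt (2*Real.pi)) * (1/Real.sqrt (2*Real.pi)) * (2 * Real.sin ((x'-x)*R) / (x'-x))
      = Real.sin (R*(x-x'))/(Real.pi*(x-x')) := by
  have h2π : Real.sqrt (2*Real.pi) * Real.sqrt (2*Real.pi) = 2*Real.pi :=
    Real.mul_self_sqrt (by positivity)
  have hb : x - x' ≠ 0 := fun h => ha (by linarith [h])
  have hs : Real.sin (R*(x-x')) = -Real.sin ((x'-x)*R) := by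
    rw [show R*(x-x') = -((x'-x)*R) by ring, Real.sin_neg]
  have h1 : (1/Real.sqrt (2*Real.pi)) * (1/Real.sqrt (2*Real.pi)) = 1/(2*Real.pi) := by
    rw [div_mul_div_comm, one_mul, h2π]
  rw [hs, h1, show x - x' = -(x'-x) by ring, mul_neg, neg_div_neg_eq]
  have hπ : Real.pi ≠ 0 := Real.pi_ne_zero
  field_simp

theorem part1 (R : ℝ) (hR : 0 < R) (f : ℝ → ℂ) (hfc : Continuous f)
    (hsupp : Function.support f ⊆ Set.Icc (-1) 1) (x : ℝ) :
    ((1 / Real.sqrt (2 * Real.pi) : ℝ) : ℂ) *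
        (∫ y in Set.Icc (-R) R, FT f y * Complex.exp (-Complex.I * y * x))
      = Kop R f x := by
  set c : ℝ := 1 / Real.sqrt (2 * Real.pi) with hc
  have hfi : Integrable f := by
    have hcs : HasCompactSupport f :=
      HasCompactSupport.intro (isCompact_Icc (a := (-1:ℝ)) (b := 1))
        (fun y hy => by
          by_contra h
          exact hy (hsupp (Function.mem_support.mpr h)))
    exact hfc.integrable_of_hasCompactSupport hcs
  -- rewrite the integrand
  have key : ∀ y : ℝ, FT f y * Complex.exp (-Complex.I * y * x)
      = (c:ℂ) * ∫ x' : ℝ, f x' * Complex.exp (Complex.I * x' * y)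
          * Complex.exp (-Complex.I * y * x) := by
    intro y
    rw [FT, mul_assoc, ← integral_mul_const]
  simp only [key]
  rw [integral_const_mul, ← mul_assoc]
  -- Fubini
  haveI : IsFiniteMeasure ((volume : Measure ℝ).restrict (Set.Icc (-R) R)) :=
    ⟨by rw [Measure.restrict_apply_univ]; exact measure_Icc_lt_top⟩
  have hint : Integrable (Function.uncurry fun (y : ℝ) (x' : ℝ) =>
      f x' * Complex.exp (Complex.I * x' * y) * Complex.exp (-Complex.I * y * x))
      (((volume : Measure ℝ).restrict (Set.Icc (-R) R)).prod volume) := by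
    have hmeas : AEStronglyMeasurable (Function.uncurry fun (y : ℝ) (x' : ℝ) =>
        f x' * Complex.exp (Complex.I * x' * y) * Complex.exp (-Complex.I * y * x))
        (((volume : Measure ℝ).restrict (Set.Icc (-R) R)).prod volume) := by
      refine Continuous.aestronglyMeasurable ?_
      have h1 : Continuous fun p : ℝ × ℝ => f p.2 := hfc.comp continuous_snd
      have h2 : Continuous fun p : ℝ × ℝ =>
          Complex.exp (Complex.I * p.2 * p.1) := by
        refine Complex.continuous_exp.comp ?_
        continuity
      have h3 : Continuous fun p : ℝ × ℝ =>
          Complex.exp (-Complex.I * p.1 * x) := by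
        refine Complex.continuous_exp.comp ?_
        continuity
      exact (h1.mul h2).mul h3
    have hbound : Integrable (fun z : ℝ × ℝ => (1:ℝ) * ‖f z.2‖)
        (((volume : Measure ℝ).restrict (Set.Icc (-R) R)).prod volume) :=
      (integrable_const (1:ℝ)).mul_prod hfi.norm
    refine hbound.mono' hmeas (Eventually.of_forall fun z => ?_)
    simp only [Function.uncurry]
    rw [norm_mul, norm_mul]
    simp only [Complex.norm_exp]
    simp [one_mul]
  rw [integral_integral_swap hint]
  rw [← integral_const_mul]
  -- pointwise identification of the inner integral
  have h0 : ∀ᵐ (x' : ℝ), x' ≠ x := by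
    rw [ae_iff]
    have : {x' : ℝ | ¬ x' ≠ x} = {x} := by ext y; simp
    rw [this]
    exact measure_singleton x
  have hcong : (fun x' : ℝ => (c:ℂ) * (c:ℂ) * ∫ y in Set.Icc (-R) R,
        f x' * Complex.exp (Complex.I * x' * y) * Complex.exp (-Complex.I * y * x))
      =ᵐ[volume] fun x' =>
        ((Real.sin (R * (x - x')) / (Real.pi * (x - x')) : ℝ) : ℂ) * f x' := by
    filter_upwards [h0] with x' hx'
    have ha : x' - x ≠ 0 := sub_ne_zero.mpr hx'
    have haC : ((x' - x : ℝ) : ℂ) ≠ 0 := by exact_mod_cast ha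
    have hcne : Complex.I * ((x' - x : ℝ) : ℂ) ≠ 0 := mul_ne_zero Complex.I_ne_zero haC
    have hinner : (∫ y in Set.Icc (-R) R,
        f x' * Complex.exp (Complex.I * x' * y) * Complex.exp (-Complex.I * y * x))
        = f x' * ((2 * Complex.sin (((x' - x : ℝ) : ℂ) * R)) / ((x' - x : ℝ) : ℂ)) := by
      have e1 : (fun y : ℝ => f x' * Complex.exp (Complex.I * x' * y)
          * Complex.exp (-Complex.I * y * x))
          = fun y : ℝ => f x' * Complex.exp ((Complex.I * ((x' - x : ℝ) : ℂ)) * y) := by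
        funext y
        rw [mul_assoc, ← Complex.exp_add]
        congr 1
        congr 1
        push_cast
        ring
      rw [e1, integral_const_mul]
      congr 1
      rw [integral_Icc_eq_integral_Ioc,
        ← intervalIntegral.integral_of_le (by linarith : -R ≤ R),
        integral_exp_mul_complex hcne]
      have e2 : Complex.I * ((x' - x : ℝ) : ℂ) * (R : ℂ)
          = Complex.I * (((x' - x : ℝ) : ℂ) * R) := by ring
      have e3 : Complex.I * ((x' - x : ℝ) : ℂ) * ((-R : ℝ) : ℂ)
          = -(Complex.I * (((x' - x : ℝ) : ℂ) * R)) := by push_cast; ring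
      rw [e2, e3, exp_sub_exp,
        show (2:ℂ)*Complex.I*Complex.sin (((x' - x : ℝ) : ℂ) * R)
            = Complex.I*(2*Complex.sin (((x' - x : ℝ) : ℂ) * R)) from by ring,
        mul_div_mul_left _ _ Complex.I_ne_zero]
    rw [hinner]
    have hreal := real_kernel R x x' ha
    calc (c:ℂ) * (c:ℂ) * (f x' * ((2 * Complex.sin (((x' - x : ℝ) : ℂ) * R)) / ((x' - x : ℝ) : ℂ)))
        = ((c * c * (2 * Real.sin ((x'-x)*R) / (x'-x)) : ℝ) : ℂ) * f x' := by
          rw [show (((x' - x : ℝ) : ℂ) * R) = (((x'-x)*R : ℝ) : ℂ) by push_cast; ring,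
            ← Complex.ofReal_sin]
          push_cast
          ring
      _ = ((Real.sin (R * (x - x')) / (Real.pi * (x - x')) : ℝ) : ℂ) * f x' := by
          rw [hc]
          rw [real_kernel R x x' ha]
  rw [integral_congr_ae hcong, Kop]
  refine Eq.symm (setIntegral_eq_integral_of_forall_compl_eq_zero fun x' hx' => ?_)
  have hz : f x' = 0 := by
    by_contra h
    exact hx' (hsupp (Function.mem_support.mpr h))
  rw [hz, mul_zero]

theorem stmt_15 (R : ℝ) (hR : 0 < R) :
    -- Π₁ F† Π_R F Π₁ is the integral operator with kernel sin(R(x-x'))/(π(x-x'))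
    (∀ f : ℝ → ℂ, Continuous f → Function.support f ⊆ Set.Icc (-1) 1 →
      ∀ x : ℝ,
        ((1 / Real.sqrt (2 * Real.pi) : ℝ) : ℂ) *
            (∫ y in Set.Icc (-R) R, FT f y * Complex.exp (-Complex.I * y * x))
          = Kop R f x) ∧
    -- it commutes with the prolate spheroidal differential operator
    (∀ f : ℝ → ℂ, ContDiff ℝ (⊤ : ℕ∞) f → ∀ x ∈ Set.Icc (-1 : ℝ) 1,
      Kop R (Lop R f) x = Lop R (Kop R f) x) := by
  constructor
  · exact fun f hfc hsupp x => part1 R hR f hfc hsupp x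
  · exact fun f hf x _ => part2 R f hf x
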